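/- The weakened form of Jackson's conjecture with bound 4k instead of 4k+1 is also false: there exists a 3-diregular oriented graph on exactly 4·3 = 12 vertices with no directed Hamiltonian cycle. -/

import Mathlib

set_option maxHeartbeats 4000000

def arcB (i j : ZMod 12) : Bool := decide (j - i = 2 ∨ j - i = 3 ∨ j - i = 8)

def srch : ℕ → List (ZMod 12) → ZMod 12 → Bool
  | 0, _, x => arcB x 0
  | n+1, s, x => ([2,3,8] : List (ZMod 12)).any fun d =>
      !(decide ((x+d) ∈ s)) && srch n ((x+d) :: s) (x+d)

lemma srch_complete : ∀ (l : List (ZMod 12)) (x : ZMod 12) (s : List (ZMod 12)),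
    List.Chain (fun a b => arcB a b = true) x (l ++ [0]) → l.Nodup →
    (∀ y ∈ l, y ∉ s) → srch l.length s x = true := by
  intro l
  induction l with
  | nil =>
    intro x s hc _ _
    simp only [List.nil_append, List.chain_cons, List.Chain, List.isChain_cons_cons] at hc
    exact hc.1
  | cons y l ih =>
    intro x s hc hnd hs
    simp only [List.cons_append, List.chain_cons, List.Chain, List.isChain_cons_cons] at hc
    obtain ⟨hxy, hc⟩ := hc
    have hy : y = x + 2 ∨ y = x + 3 ∨ y = x + 8 := by
      rcases of_decide_eq_true hxy with h | h | h
      · exact Or.inl (by rw [← h]; ring)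
      · exact Or.inr (Or.inl (by rw [← h]; ring))
      · exact Or.inr (Or.inr (by rw [← h]; ring))
    simp only [List.nodup_cons] at hnd
    have hrec : srch l.length (y :: s) y = true := by
      apply ih y (y :: s) hc hnd.2
      intro z hz
      simp only [List.mem_cons]
      rintro (rfl | hzs)
      · exact hnd.1 hz
      · exact hs z (List.mem_cons_of_mem _ hz) hzs
    have hns : decide (y ∈ s) = false :=
      decide_eq_false (hs y List.mem_cons_self)
    show srch (l.length + 1) s x = true
    simp only [srch, List.any_eq_true]
    rcases hy with rfl | rfl | rfl
    · exact ⟨2, by simp, by simp [hns, hrec]⟩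
    · exact ⟨3, by simp, by simp [hns, hrec]⟩
    · exact ⟨8, by simp, by simp [hns, hrec]⟩

theorem stmt_9 :
    ∃ arc : ZMod 12 → ZMod 12 → Bool,
      Fintype.card (ZMod 12) = 4 * 3 ∧
      (∀ v : ZMod 12, (Finset.univ.filter (fun j => arc v j)).card = 3) ∧
      (∀ v : ZMod 12, (Finset.univ.filter (fun i => arc i v)).card = 3) ∧
      (∀ i j : ZMod 12, ¬ (arc i j ∧ arc j i)) ∧
      ¬ ∃ v : ZMod 12 ≃ ZMod 12, ∀ k : ZMod 12, arc (v k) (v (k + 1)) := by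
  refine ⟨arcB, by decide, by decide, by decide, by decide, ?_⟩
  rintro ⟨v, hv⟩
  set w : ZMod 12 ≃ ZMod 12 := (Equiv.addRight (v.symm 0)).trans v with hw
  have hw0 : w 0 = 0 := by simp [hw]
  have key : ∀ k : ZMod 12, arcB (w k) (w (k + 1)) = true := by
    intro k
    have := hv (k + v.symm 0)
    simpa [hw, add_right_comm] using this
  have hfalse : srch 11 [0] 0 = true := by
    have := srch_complete [w 1, w 2, w 3, w 4, w 5, w 6, w 7, w 8, w 9, w 10, w 11] 0 [0]
      ?_ ?_ ?_
    · exact this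
    · have k0 := key 0; rw [hw0] at k0
      have k11 := key 11
      have h12 : (11 + 1 : ZMod 12) = 0 := by decide
      rw [h12, hw0] at k11
      simp only [List.cons_append, List.nil_append, List.chain_cons, List.Chain.nil, List.Chain, List.isChain_cons_cons, List.isChain_singleton,
        and_true]
      exact ⟨by simpa using k0, key 1, key 2,
        key 3, key 4, key 5,
        key 6, key 7, key 8,
        key 9, key 10, k11⟩
    · have h1 : ([1,2,3,4,5,6,7,8,9,10,11] : List (ZMod 12)).Nodup := by decide
      have h2 := h1.map w.injective
      simpa using h2
    · intro y hy
      simp only [List.mem_cons, List.mem_singleton, List.not_mem_nil] at hy ⊢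
      intro h0
      rcases h0 with rfl | h0
      · rw [← hw0] at hy
        simp only [EmbeddingLike.apply_eq_iff_eq] at hy
        revert hy; decide
      · exact h0
  have : srch 11 [0] 0 = false := by decide
  rw [this] at hfalse
  exact Bool.false_ne_true hfalse
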